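/- Consider the discrete closed-loop error dynamics e_k = e_{k−1} − J(λI + JᵀJ)⁻¹Jᵀ e_{k−1} with λ > 0. Then the Lyapunov function V_k = (1/2)‖e_k‖² satisfies V_k − V_{k−1} = −Δr_kᵀ(λI + (1/2)JᵀJ)Δr_k ≤ 0, where Δr_k = (λI + JᵀJ)⁻¹Jᵀ e_{k−1}. -/

import Mathlib

open Matrix

/-- For the closed-loop error dynamics eₖ = eₖ₋₁ − J(λI+JᵀJ)⁻¹Jᵀeₖ₋₁,
    the Lyapunov function V = (1/2)‖e‖² satisfies
    V_k − V_{k−1} = −Δrᵀ(λI + (1/2)JᵀJ)Δr ≤ 0. -/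
theorem lyapunov_decrease
    (p q : ℕ) (J : Matrix (Fin p) (Fin q) ℝ) (lam : ℝ) (hlam : 0 < lam)
    (ePrev eNow : Fin p → ℝ) (Δr : Fin q → ℝ)
    (hΔr : Δr = (lam • (1 : Matrix (Fin q) (Fin q) ℝ) + Jᵀ * J)⁻¹.mulVec
      (Jᵀ.mulVec ePrev))
    (hE : eNow = ePrev - J.mulVec Δr)
    (Vk Vkm : ℝ)
    (hVk : Vk = (1 / 2 : ℝ) * (eNow ⬝ᵥ eNow))
    (hVkm : Vkm = (1 / 2 : ℝ) * (ePrev ⬝ᵥ ePrev)) :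
    Vk - Vkm = -(Δr ⬝ᵥ (lam • (1 : Matrix (Fin q) (Fin q) ℝ)
        + (1 / 2 : ℝ) • (Jᵀ * J)).mulVec Δr) ∧
      Vk - Vkm ≤ 0 := by
  set A : Matrix (Fin q) (Fin q) ℝ := lam • (1 : Matrix (Fin q) (Fin q) ℝ) + Jᵀ * J with hAdef
  have hpd : A.PosDef := by
    rw [Matrix.posDef_iff_dotProduct_mulVec]
    constructor
    · unfold Matrix.IsHermitian
      simp [hAdef, Matrix.transpose_add, Matrix.transpose_smul, Matrix.transpose_mul,
        Matrix.conjTranspose_eq_transpose_of_trivial]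
    · intro x hx
      have hxx : (0:ℝ) < x ⬝ᵥ x := by
        have h := (dotProduct_self_eq_zero (v := x)).not.mpr hx
        have h2 : (0:ℝ) ≤ x ⬝ᵥ x := by simpa using dotProduct_self_star_nonneg x
        exact lt_of_le_of_ne h2 (Ne.symm h)
      have key : star x ⬝ᵥ A.mulVec x = lam * (x ⬝ᵥ x) + (J.mulVec x) ⬝ᵥ (J.mulVec x) := by
        simp only [hAdef, Matrix.add_mulVec, Matrix.smul_mulVec, Matrix.one_mulVec,
          dotProduct_add, dotProduct_smul, star_trivial, smul_eq_mul]
        congr 1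
        rw [← Matrix.mulVec_mulVec, Matrix.dotProduct_mulVec, ← Matrix.mulVec_transpose,
          Matrix.transpose_transpose]
      simp only [star_trivial] at key ⊢
      rw [key] at *
      have : (0:ℝ) ≤ (J.mulVec x) ⬝ᵥ (J.mulVec x) := by simpa using dotProduct_self_star_nonneg (J.mulVec x)
      positivity
  have hdet : IsUnit A.det := hpd.det_pos.ne'.isUnit
  have hAinv : A * A⁻¹ = 1 := Matrix.mul_nonsing_inv A hdet
  have hAΔr : A.mulVec Δr = Jᵀ.mulVec ePrev := by
    rw [hΔr, Matrix.mulVec_mulVec, hAinv, Matrix.one_mulVec]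
  -- key dot product identity
  have hkey : ePrev ⬝ᵥ J.mulVec Δr = (A.mulVec Δr) ⬝ᵥ Δr := by
    rw [hAΔr, Matrix.dotProduct_mulVec, ← Matrix.mulVec_transpose]
  have hJJ : (J.mulVec Δr) ⬝ᵥ (J.mulVec Δr) = Δr ⬝ᵥ (Jᵀ * J).mulVec Δr := by
    rw [← Matrix.mulVec_mulVec, Matrix.dotProduct_mulVec, ← Matrix.mulVec_transpose]
    exact dotProduct_comm _ _
  have hA1 : (A.mulVec Δr) ⬝ᵥ Δr = lam * (Δr ⬝ᵥ Δr) + Δr ⬝ᵥ (Jᵀ * J).mulVec Δr := by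
    rw [dotProduct_comm]
    simp [hAdef, Matrix.add_mulVec, Matrix.smul_mulVec, Matrix.one_mulVec,
      dotProduct_add, dotProduct_smul, smul_eq_mul]
  have hRHS : Δr ⬝ᵥ (lam • (1 : Matrix (Fin q) (Fin q) ℝ)
        + (1 / 2 : ℝ) • (Jᵀ * J)).mulVec Δr
      = lam * (Δr ⬝ᵥ Δr) + (1/2) * (Δr ⬝ᵥ (Jᵀ * J).mulVec Δr) := by
    simp [Matrix.add_mulVec, Matrix.smul_mulVec, Matrix.one_mulVec,
      dotProduct_add, dotProduct_smul, smul_eq_mul]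
  have hdiff : Vk - Vkm = -(lam * (Δr ⬝ᵥ Δr) + (1/2) * (Δr ⬝ᵥ (Jᵀ * J).mulVec Δr)) := by
    rw [hVk, hVkm, hE]
    simp only [sub_dotProduct, dotProduct_sub]
    rw [dotProduct_comm (J.mulVec Δr) ePrev, hkey, hJJ, hA1]
    ring
  constructor
  · rw [hdiff, hRHS]
  · rw [hdiff]
    have h1 : (0:ℝ) ≤ Δr ⬝ᵥ Δr := by simpa using dotProduct_self_star_nonneg Δr
    have h2 : (0:ℝ) ≤ Δr ⬝ᵥ (Jᵀ * J).mulVec Δr := by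
      rw [← hJJ]; simpa using dotProduct_self_star_nonneg (J.mulVec Δr)
    nlinarith
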